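/- Let λ > 0, N ∈ ℕ with N ≥ 1, ν + β = λ/N, a₊ ∈ H∞⁺, a₋ ∈ H∞⁻, g = a₋ e_{-β} + a₊ e_ν, and let G be the 2×2 matrix function with entries G₁₁ = e_{-λ}, G₁₂ = 0, G₂₁ = g, G₂₂ = e_λ. Define φ₁₊ = e_{λ-ν} ∑_{j=0}^{N-1} (-1)^j a₊^{N-1-j} a₋^j e_{-jλ/N}, φ₂₊ = -a₊^N, φ₁₋ = e_{-λ} φ₁₊, φ₂₋ = (-1)^{N-1} a₋^N. Then G (φ₁₊, φ₂₊)ᵀ = (φ₁₋, φ₂₋)ᵀ pointwise on ℝ. -/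

import Mathlib

noncomputable section
open Complex MeasureTheory Filter Topology
open scoped ENNReal

/-- Bounded analytic functions on the upper half-plane. -/
def HInfPlus (f : ℂ → ℂ) : Prop :=
  DifferentiableOn ℂ f {z : ℂ | 0 < z.im} ∧
    ∃ C : ℝ, ∀ z : ℂ, 0 < z.im → ‖f z‖ ≤ C

/-- Bounded analytic functions on the lower half-plane. -/
def HInfMinus (f : ℂ → ℂ) : Prop :=
  DifferentiableOn ℂ f {z : ℂ | z.im < 0} ∧
    ∃ C : ℝ, ∀ z : ℂ, z.im < 0 → ‖f z‖ ≤ C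

/-- Hardy class `H_p` of the upper half-plane. -/
def HardyPlus (p : ℝ≥0∞) (f : ℂ → ℂ) : Prop :=
  DifferentiableOn ℂ f {z : ℂ | 0 < z.im} ∧
    ∃ C : ℝ≥0∞, ∀ y : ℝ, 0 < y →
      eLpNorm (fun x : ℝ => f (x + y * Complex.I)) p volume ≤ C

/-- Hardy class `H_p` of the lower half-plane. -/
def HardyMinus (p : ℝ≥0∞) (f : ℂ → ℂ) : Prop :=
  DifferentiableOn ℂ f {z : ℂ | z.im < 0} ∧
    ∃ C : ℝ≥0∞, ∀ y : ℝ, y < 0 →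
      eLpNorm (fun x : ℝ => f (x + y * Complex.I)) p volume ≤ C

/-- A function on `ℝ` is a boundary value of an `H∞⁺` function. -/
def BdryHInfPlus (d : ℝ → ℂ) : Prop := ∃ F : ℂ → ℂ, HInfPlus F ∧ ∀ x : ℝ, F x = d x

/-- A function on `ℝ` is a boundary value of an `H∞⁻` function. -/
def BdryHInfMinus (d : ℝ → ℂ) : Prop := ∃ F : ℂ → ℂ, HInfMinus F ∧ ∀ x : ℝ, F x = d x

/-- `d` is of (strictly) positive type. -/
def PositiveType (d : ℝ → ℂ) : Prop :=
  (BdryHInfPlus d ∨ BdryHInfMinus fun x => (d x)⁻¹) ∧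
    ¬ (BdryHInfMinus d ∨ BdryHInfPlus fun x => (d x)⁻¹)


/-- The entire exponential `z ↦ e^{iμz}`. -/
def eFun (mu : ℝ) : ℂ → ℂ := fun z => Complex.exp (Complex.I * mu * z)


lemma eFun_mul (a b : ℝ) (z : ℂ) : eFun a z * eFun b z = eFun (a + b) z := by
  unfold eFun
  rw [← Complex.exp_add]
  congr 1
  push_cast
  ring

lemma eFun_pow (a : ℝ) (z : ℂ) (n : ℕ) : eFun a z ^ n = eFun (n * a) z := by
  unfold eFun
  rw [← Complex.exp_nat_mul]
  congr 1
  push_cast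
  ring

lemma eFun_zero (z : ℂ) : eFun 0 z = 1 := by
  simp [eFun]

lemma key_factor (x y : ℂ) (M : ℕ) :
    (x + y) * ∑ j ∈ Finset.range (M + 1), (-1 : ℂ) ^ j * x ^ (M + 1 - 1 - j) * y ^ j
      = x ^ (M + 1) + (-1 : ℂ) ^ M * y ^ (M + 1) := by
  have h := geom_sum₂_mul (-y) x (M + 1)
  rw [neg_pow] at h
  have hs : ∑ j ∈ Finset.range (M + 1), (-1 : ℂ) ^ j * x ^ (M + 1 - 1 - j) * y ^ j
      = ∑ j ∈ Finset.range (M + 1), (-y) ^ j * x ^ (M + 1 - 1 - j) :=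
    Finset.sum_congr rfl fun j _ => by rw [neg_pow]; ring
  rw [hs]
  have hm : (-1 : ℂ) ^ (M + 1) = -(-1 : ℂ) ^ M := by rw [pow_succ]; ring
  rw [hm] at h
  linear_combination -h

/-- The algebraic part of Theorem 4.2: `G (φ₁₊, φ₂₊)ᵀ = (φ₁₋, φ₂₋)ᵀ` pointwise on `ℝ`. -/
theorem stmt11 (lam nu beta : ℝ) (N : ℕ) (hN : 1 ≤ N) (hlam : 0 < lam)
    (hnu : 0 ≤ nu) (hbeta : 0 ≤ beta) (hsum : nu + beta = lam / N)
    (ap am : ℂ → ℂ) (hap : HInfPlus ap) (ham : HInfMinus am)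
    (g : ℝ → ℂ) (hg : ∀ x : ℝ, g x = am x * eFun (-beta) x + ap x * eFun nu x)
    (G : ℝ → Matrix (Fin 2) (Fin 2) ℂ)
    (hG : ∀ x : ℝ, G x = !![eFun (-lam) x, 0; g x, eFun lam x])
    (φ1p φ2p φ1m φ2m : ℂ → ℂ)
    (hφ1p : ∀ z, φ1p z = eFun (lam - nu) z *
      ∑ j ∈ Finset.range N,
        (-1 : ℂ) ^ j * ap z ^ (N - 1 - j) * am z ^ j * eFun (-((j : ℝ) * lam / N)) z)
    (hφ2p : ∀ z, φ2p z = -(ap z ^ N))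
    (hφ1m : ∀ z, φ1m z = eFun (-lam) z * φ1p z)
    (hφ2m : ∀ z, φ2m z = (-1 : ℂ) ^ (N - 1) * am z ^ N) :
    ∀ x : ℝ, (G x).mulVec ![φ1p x, φ2p x] = ![φ1m x, φ2m x] := by
  intro x
  obtain ⟨M, rfl⟩ : ∃ M, N = M + 1 := ⟨N - 1, (Nat.succ_pred_eq_of_pos hN).symm⟩
  have hNne : ((M : ℝ) + 1) ≠ 0 := by positivity
  set X := ap x * eFun nu x with hX
  set Y := am x * eFun (-beta) x with hY
  -- rewrite the sum
  have hterm : ∀ j ∈ Finset.range (M + 1),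
      eFun (lam - nu) x * ((-1 : ℂ) ^ j * ap x ^ (M + 1 - 1 - j) * am x ^ j
        * eFun (-((j : ℝ) * lam / ((M + 1 : ℕ) : ℝ))) x)
      = eFun (lam - (M + 1) * nu) x * ((-1 : ℂ) ^ j * X ^ (M + 1 - 1 - j) * Y ^ j) := by
    intro j hj
    have hjle : j ≤ M := Nat.lt_succ_iff.mp (Finset.mem_range.mp hj)
    have hcast : ((M + 1 - 1 - j : ℕ) : ℝ) = (M : ℝ) - j := by
      simp only [Nat.add_sub_cancel]
      rw [Nat.cast_sub hjle]
    have hlamj : (j : ℝ) * lam / ((M + 1 : ℕ) : ℝ) = (j : ℝ) * (nu + beta) := by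
      rw [hsum, mul_div_assoc]
    rw [hX, hY, mul_pow, mul_pow, eFun_pow, eFun_pow]
    rw [hcast]
    have e1 : eFun (lam - nu) x * eFun (-((j : ℝ) * lam / ((M + 1 : ℕ) : ℝ))) x
        = eFun (lam - nu - (j : ℝ) * (nu + beta)) x := by
      rw [eFun_mul, hlamj]; ring_nf
    have e2 : eFun (lam - (M + 1) * nu) x * (eFun (((M : ℝ) - j) * nu) x
        * eFun ((j : ℝ) * -beta) x)
        = eFun (lam - nu - (j : ℝ) * (nu + beta)) x := by
      rw [eFun_mul, eFun_mul]
      congr 1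
      push_cast
      ring
    calc eFun (lam - nu) x * ((-1 : ℂ) ^ j * ap x ^ (M + 1 - 1 - j) * am x ^ j
          * eFun (-((j : ℝ) * lam / ((M + 1 : ℕ) : ℝ))) x)
        = (eFun (lam - nu) x * eFun (-((j : ℝ) * lam / ((M + 1 : ℕ) : ℝ))) x)
          * ((-1 : ℂ) ^ j * ap x ^ (M + 1 - 1 - j) * am x ^ j) := by ring
      _ = (eFun (lam - (M + 1) * nu) x * (eFun (((M : ℝ) - j) * nu) x
          * eFun ((j : ℝ) * -beta) x))
          * ((-1 : ℂ) ^ j * ap x ^ (M + 1 - 1 - j) * am x ^ j) := by rw [e1, e2]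
      _ = _ := by ring
  have hphi1 : φ1p x = eFun (lam - (M + 1) * nu) x
      * ∑ j ∈ Finset.range (M + 1), (-1 : ℂ) ^ j * X ^ (M + 1 - 1 - j) * Y ^ j := by
    rw [hφ1p, Finset.mul_sum, Finset.sum_congr rfl hterm, ← Finset.mul_sum]
  -- row 1 computation
  have hrow1 : g x * φ1p x + eFun lam x * φ2p x = φ2m x := by
    rw [hphi1, hφ2p, hφ2m, hg]
    have : (am x * eFun (-beta) x + ap x * eFun nu x)
        * (eFun (lam - (M + 1) * nu) x
          * ∑ j ∈ Finset.range (M + 1), (-1 : ℂ) ^ j * X ^ (M + 1 - 1 - j) * Y ^ j)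
        = eFun (lam - (M + 1) * nu) x
          * ((X + Y) * ∑ j ∈ Finset.range (M + 1),
              (-1 : ℂ) ^ j * X ^ (M + 1 - 1 - j) * Y ^ j) := by
      rw [hX, hY]; ring
    rw [this, key_factor]
    have hXN : X ^ (M + 1) = ap x ^ (M + 1) * eFun (((M : ℝ) + 1) * nu) x := by
      rw [hX, mul_pow, eFun_pow]; push_cast; ring_nf
    have hYN : Y ^ (M + 1) = am x ^ (M + 1) * eFun (((M : ℝ) + 1) * -beta) x := by
      rw [hY, mul_pow, eFun_pow]; push_cast; ring_nf
    have hXe : eFun (lam - (M + 1) * nu) x * eFun (((M : ℝ) + 1) * nu) x = eFun lam x := by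
      rw [eFun_mul]; push_cast; ring_nf
    have hYe : eFun (lam - (M + 1) * nu) x * eFun (((M : ℝ) + 1) * -beta) x = 1 := by
      rw [eFun_mul]
      have : lam - ((M : ℕ) + 1 : ℝ) * nu + ((M : ℝ) + 1) * -beta = 0 := by
        have : nu + beta = lam / ((M : ℝ) + 1) := by rw [hsum]; push_cast; ring_nf
        field_simp at this
        push_cast
        linarith [this]
      rw [this, eFun_zero]
    rw [hXN, hYN]
    simp only [Nat.add_sub_cancel]
    linear_combination ap x ^ (M + 1) * hXe + (-1 : ℂ) ^ M * am x ^ (M + 1) * hYe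
  rw [hG]
  funext i
  fin_cases i
  · simp [Matrix.mulVec, dotProduct, Fin.sum_univ_two, hφ1m]
  · simpa [Matrix.mulVec, dotProduct, Fin.sum_univ_two] using hrow1
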